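/- arXiv:1507.07357 — 2 statements merged into one kernel-verified Lean document; each statement's English description precedes it below -/
import Mathlib

section
/- Poisson kernel reproduces the logarithm: for any x₀ with ‖x₀‖ < 1 and any y with ‖y‖ = 1 (or more generally ‖y‖ ≥ 1), ∫_{‖x‖=1} log(‖x - y‖) · (1/(2π)) (1-‖x₀‖²)/‖x-x₀‖² ds(x) = log(‖x₀ - y‖), where ds is arc-length measure on the unit circle. -/
open MeasureTheory Real

noncomputable section

abbrev E2 := EuclideanSpace ℝ (Fin 2)

noncomputable def sInt (σ : MeasureTheory.SignedMeasure E2) (f : E2 → ℝ) : ℝ :=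
  ∫ x, f x ∂σ.toJordanDecomposition.posPart - ∫ x, f x ∂σ.toJordanDecomposition.negPart

noncomputable def totalVar (σ : MeasureTheory.SignedMeasure E2) : Measure E2 :=
  σ.toJordanDecomposition.posPart + σ.toJordanDecomposition.negPart

def finiteLogEnergy (σ : MeasureTheory.SignedMeasure E2) : Prop :=
  ∫⁻ x, ∫⁻ y, ENNReal.ofReal |Real.log (dist x y)| ∂(totalVar σ) ∂(totalVar σ) < ⊤

def memM (σ : MeasureTheory.SignedMeasure E2) : Prop :=
  σ Set.univ = 0 ∧ (∀ x : E2, σ {x} = 0) ∧ finiteLogEnergy σ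

noncomputable def pairing (σ ν : MeasureTheory.SignedMeasure E2) : ℝ :=
  -(sInt σ fun x => sInt ν fun y => Real.log (dist x y))

noncomputable def heatKernel (t : ℝ) (x y : E2) : ℝ :=
  (2 * π * t)⁻¹ * Real.exp (-(dist x y)^2 / (2 * t))

structure BM (Ω : Type) [MeasurableSpace Ω] where
  P : E2 → Measure Ω
  W : ℝ → Ω → E2
  prob : ∀ x, IsProbabilityMeasure (P x)
  meas : ∀ t, Measurable (W t)
  start : ∀ x, ∀ᵐ ω ∂P x, W 0 ω = x
  cont : ∀ x, ∀ᵐ ω ∂P x, Continuous fun t => W t ω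
  incr : ∀ x : E2, ∀ s t : ℝ, 0 ≤ s → s < t →
    Measure.map (fun ω => W t ω - W s ω) (P x)
      = volume.withDensity fun y => ENNReal.ofReal (heatKernel (t - s) 0 y)
  indep : ∀ x : E2, ∀ n : ℕ, ∀ t : Fin (n+1) → ℝ, Monotone t → 0 ≤ t 0 →
    ProbabilityTheory.iIndepFun
      (fun i : Fin n => fun ω => W (t i.succ) ω - W (t i.castSucc) ω) (P x)

noncomputable def hitTime {Ω : Type} [MeasurableSpace Ω] (B : BM Ω) (D : Set E2) (ω : Ω) : ℝ :=
  sInf {t | 0 ≤ t ∧ B.W t ω ∈ D}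

noncomputable def hitLaw {Ω : Type} [MeasurableSpace Ω] (B : BM Ω) (D : Set E2) (x : E2) : Measure E2 :=
  Measure.map (fun ω => B.W (hitTime B D ω) ω) (B.P x)

noncomputable def lap (f : E2 → ℝ) (x : E2) : ℝ :=
  ∑ i : Fin 2, iteratedFDeriv ℝ 2 f x ![EuclideanSpace.single i 1, EuclideanSpace.single i 1]

noncomputable def circlePt (θ : ℝ) : E2 := (WithLp.equiv 2 (Fin 2 → ℝ)).symm ![Real.cos θ, Real.sin θ]

noncomputable def arcLength : Measure E2 := Measure.map circlePt (volume.restrict (Set.Ico 0 (2*π)))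

section MyAux
open intervalIntegral Set Complex Metric Filter Topology

lemma my_log_int : IntervalIntegrable Real.log volume 0 (π/2) := by
  apply IntervalIntegrable.mono_fun
    (((intervalIntegral.intervalIntegrable_rpow' (r := -(1/2)) (by norm_num)).const_mul
      2).add (intervalIntegral.intervalIntegrable_id))
    Real.measurable_log.aestronglyMeasurable
  rw [uIoc_of_le (by positivity)]
  filter_upwards [ae_restrict_mem measurableSet_Ioc] with x hx
  have hx0 : 0 < x := hx.1
  have h2 : (0:ℝ) < 2 * x ^ (-(1/2) : ℝ) + x := by positivity
  rw [Real.norm_eq_abs, Real.norm_eq_abs, abs_of_pos h2]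
  rcases le_or_gt x 1 with h1 | h1
  · have he : -Real.log x = 2 * Real.log (x ^ (-(1/2) : ℝ)) := by
      rw [Real.log_rpow hx0]; ring
    have hb : Real.log (x ^ (-(1/2):ℝ)) ≤ x ^ (-(1/2):ℝ) - 1 :=
      Real.log_le_sub_one_of_pos (by positivity)
    have : |Real.log x| ≤ 2 * x ^ (-(1/2):ℝ) := by
      rw [_root_.abs_of_nonpos (Real.log_nonpos hx0.le h1), he]; nlinarith
    nlinarith
  · have : |Real.log x| ≤ x - 1 := by
      rw [_root_.abs_of_nonneg (Real.log_nonneg h1.le)]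
      exact Real.log_le_sub_one_of_pos hx0
    have : (0:ℝ) < 2 * x ^ (-(1/2):ℝ) := by positivity
    nlinarith

lemma my_logsin_int0 : IntervalIntegrable (fun x => Real.log (Real.sin x)) volume 0 (π/2) := by
  apply IntervalIntegrable.mono_fun (my_log_int.abs.add (_root_.intervalIntegrable_const (c := 1)))
    (Measurable.aestronglyMeasurable (by exact Real.measurable_log.comp Real.measurable_sin))
  rw [uIoc_of_le (by positivity)]
  filter_upwards [ae_restrict_mem measurableSet_Ioc] with x hx
  have hx0 : 0 < x := hx.1
  have hs0 : 0 < Real.sin x := Real.sin_pos_of_pos_of_lt_pi hx0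
    (lt_of_le_of_lt hx.2 (by linarith [Real.pi_pos]))
  have hlow : 2 / π * x ≤ Real.sin x := Real.mul_le_sin hx0.le hx.2
  have h2pi : (0:ℝ) < 2 / π * x := by positivity
  have hmono : Real.log (2 / π * x) ≤ Real.log (Real.sin x) := Real.log_le_log h2pi hlow
  have hup : Real.log (Real.sin x) ≤ 0 := Real.log_nonpos hs0.le (Real.sin_le_one x)
  have hsplit : Real.log (2 / π * x) = Real.log (2/π) + Real.log x :=
    Real.log_mul (by positivity) hx0.ne'
  have hc : -Real.log (2/π) ≤ 1 := by
    rw [← Real.log_inv]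
    have h4 : (2/π : ℝ)⁻¹ = π/2 := by field_simp
    rw [h4]
    have := Real.log_le_sub_one_of_pos (x := π/2) (by positivity)
    have := Real.pi_le_four
    linarith
  rw [Real.norm_eq_abs, Real.norm_eq_abs, _root_.abs_of_nonpos hup]
  have habs : |(|Real.log x| + 1)| = |Real.log x| + 1 := _root_.abs_of_pos (by positivity)
  rw [habs]
  have := neg_abs_le (Real.log x)
  linarith

lemma my_logsin_int : IntervalIntegrable (fun x => Real.log (Real.sin x)) volume (-(π/2)) (3*π/2) := by
  have P1 := my_logsin_int0
  have P2 : IntervalIntegrable (fun x => Real.log (Real.sin x)) volume (π/2) π := by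
    have h := (P1.comp_sub_left π).symm
    simp only [Real.sin_pi_sub, sub_zero] at h
    have e : π - π/2 = π/2 := by ring
    rwa [e] at h
  have P3 : IntervalIntegrable (fun x => Real.log (Real.sin x)) volume (-(π/2)) 0 := by
    have h := P2.comp_add_right π
    simp only [Real.sin_add_pi, Real.log_neg_eq_log] at h
    have e : π/2 - π = -(π/2) := by ring
    have e2 : π - π = 0 := by ring
    rwa [e, e2] at h
  have P4 : IntervalIntegrable (fun x => Real.log (Real.sin x)) volume π (3*π/2)  := by
    have h := P1.comp_sub_right π
    have e : ∀ x : ℝ, Real.sin (x - π) = -Real.sin x := by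
      intro x
      rw [show x - π = -(π - x) by ring, Real.sin_neg, Real.sin_pi_sub]
    simp only [e, Real.log_neg_eq_log] at h
    have e1 : (0:ℝ) + π = π := by ring
    have e2 : π/2 + π = 3*π/2 := by ring
    rwa [e1, e2] at h
  exact ((P3.trans P1).trans P2).trans P4

-- |e^{iu} - 1| = 2|sin(u/2)|
lemma my_abs_exp_sub_one (u : ℝ) :
    ‖Complex.exp (u * Complex.I) - 1‖ = 2 * |Real.sin (u/2)| := by
  have h1 : ‖Complex.exp (u * Complex.I) - 1‖ ^ 2 = 2 - 2 * Real.cos u := by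
    rw [Complex.sq_norm, Complex.normSq_apply]
    simp only [Complex.sub_re, Complex.sub_im, Complex.one_re, Complex.one_im,
      Complex.exp_ofReal_mul_I_re, Complex.exp_ofReal_mul_I_im]
    have := Real.sin_sq_add_cos_sq u
    ring_nf
    nlinarith [Real.sin_sq_add_cos_sq u]
  have h2 : (2 * |Real.sin (u/2)|) ^ 2 = 2 - 2 * Real.cos u := by
    rw [Real.abs_sin_half, mul_pow, Real.sq_sqrt (by nlinarith [Real.cos_le_one u])]
    ring
  have h3 : ‖Complex.exp (u * Complex.I) - 1‖ ≥ 0 := norm_nonneg _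
  have h4 : (0:ℝ) ≤ 2 * |Real.sin (u/2)| := by positivity
  nlinarith [h1, h2]

lemma my_key_integrable {b : ℂ} (hb : ‖b‖ = 1) :
    IntervalIntegrable (fun θ => Real.log (‖Complex.exp (θ * Complex.I) - b‖))
      volume 0 (2*π) := by
  set φ := Complex.arg b with hφ
  have hbexp : Complex.exp (φ * Complex.I) = b := by
    have := Complex.norm_mul_exp_arg_mul_I b
    rwa [hb, Complex.ofReal_one, one_mul] at this
  -- pointwise formula off a countable set
  have habs : ∀ θ : ℝ, ‖Complex.exp (θ * Complex.I) - b‖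
      = 2 * |Real.sin ((θ - φ)/2)| := by
    intro θ
    have : Complex.exp (θ * Complex.I) - b
        = Complex.exp (φ * Complex.I) * (Complex.exp ((θ - φ : ℝ) * Complex.I) - 1) := by
      rw [mul_sub, ← Complex.exp_add, mul_one, ← hbexp]
      push_cast
      ring_nf
    rw [this, norm_mul, Complex.norm_exp_ofReal_mul_I, one_mul, my_abs_exp_sub_one]
  -- the comparison function
  have hg : IntervalIntegrable (fun θ => Real.log 2 + Real.log (Real.sin ((θ - φ)/2)))
      volume 0 (2*π) := by
    have h1 := my_logsin_int.comp_sub_right (φ/2)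
    have h2 := h1.comp_mul_right (c := 2⁻¹)
    have h3 : IntervalIntegrable (fun x : ℝ => Real.log (Real.sin (x * 2⁻¹ - φ/2))) volume
        ((-(π/2) + φ/2) / 2⁻¹) ((3*π/2 + φ/2) / 2⁻¹) := h2
    have e1 : ((-(π/2) + φ/2) / 2⁻¹ : ℝ) = -π + φ := by ring
    have e2 : ((3*π/2 + φ/2) / 2⁻¹ : ℝ) = 3*π + φ := by ring
    rw [e1, e2] at h3
    have h4 : IntervalIntegrable (fun x : ℝ => Real.log (Real.sin ((x - φ)/2))) volume
        (-π + φ) (3*π + φ) := by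
      have e : (fun x : ℝ => Real.log (Real.sin ((x - φ)/2)))
          = fun x : ℝ => Real.log (Real.sin (x * 2⁻¹ - φ/2)) := by
        funext x
        rw [show (x - φ)/2 = x * 2⁻¹ - φ/2 from by ring]
      rw [e]
      exact h3
    have h6 := Complex.neg_pi_lt_arg b
    have h7 := Complex.arg_le_pi b
    have h8 := Real.pi_pos
    have h5 := h4.mono_set (by
      rw [Set.uIcc_of_le (a := (0:ℝ)) (b := 2*π) (by linarith),
        Set.uIcc_of_le (a := -π + φ) (b := 3*π + φ) (by linarith)]
      exact Set.Icc_subset_Icc (by simp only [hφ]; linarith) (by simp only [hφ]; linarith))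
    exact (_root_.intervalIntegrable_const (c := Real.log 2)).add h5
  -- conclude by a.e. congruence
  rw [intervalIntegrable_iff] at hg ⊢
  apply hg.congr
  have hS : volume {θ : ℝ | Real.sin ((θ - φ)/2) = 0} = 0 := by
    apply Set.Countable.measure_zero
    apply Set.Countable.mono ?_ (Set.countable_range (fun n : ℤ => φ + 2 * n * π))
    intro θ hθ
    rcases Real.sin_eq_zero_iff.1 hθ with ⟨n, hn⟩
    exact ⟨n, by push_cast; linarith⟩
  have hae : ∀ᵐ θ : ℝ ∂volume, Real.sin ((θ - φ)/2) ≠ 0 := by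
    rw [ae_iff]
    simpa using hS
  apply ae_restrict_of_ae
  filter_upwards [hae] with θ hθ
  rw [habs θ, Real.log_mul (by norm_num) (by simpa [abs_eq_zero] using hθ), Real.log_abs]

lemma my_poisson (a : ℂ) (ha : ‖a‖ < 1) (g : ℂ → ℂ)
    (hg : ∀ z ∈ Metric.closedBall (0:ℂ) 1, DifferentiableAt ℂ g z) :
    ∫ θ in (0:ℝ)..(2*π),
        (((1 - ‖a‖ ^ 2) / ‖Complex.exp (θ * Complex.I) - a‖ ^ 2 : ℝ) : ℂ)
          * g (Complex.exp (θ * Complex.I))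
      = ((2 * π : ℝ) : ℂ) * g a := by
  have hsphere : ∀ z : ℂ, z ∈ Metric.sphere (0:ℂ) 1 → ‖z‖ = 1 := by
    intro z hz
    simpa [Complex.dist_eq] using hz
  have hzmem : ∀ z : ℂ, ‖z‖ = 1 → z ∈ Metric.closedBall (0:ℂ) 1 := by
    intro z hz
    simp [Metric.mem_closedBall, Complex.dist_eq, hz]
  have hza : ∀ z : ℂ, ‖z‖ = 1 → z - a ≠ 0 := by
    intro z hz h
    rw [sub_eq_zero] at h
    rw [h] at hz
    exact absurd hz (by linarith)
  have hne : ∀ z ∈ Metric.closedBall (0:ℂ) 1, 1 - (starRingEnd ℂ) a * z ≠ 0 := by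
    intro z hz h
    rw [sub_eq_zero] at h
    have : ‖(starRingEnd ℂ) a * z‖ < 1 := by
      rw [norm_mul, Complex.norm_conj]
      have hz1 : ‖z‖ ≤ 1 := by simpa [Complex.dist_eq] using hz
      calc ‖a‖ * ‖z‖ ≤ ‖a‖ * 1 :=
            mul_le_mul_of_nonneg_left hz1 (norm_nonneg _)
        _ < 1 := by simpa using ha
    rw [← h] at this
    simp at this
  set f₂ : ℂ → ℂ := fun z => (starRingEnd ℂ) a * ((1 - (starRingEnd ℂ) a * z)⁻¹ * g z) with hf₂
  have hd₂ : ∀ z ∈ Metric.closedBall (0:ℂ) 1, DifferentiableAt ℂ f₂ z := by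
    intro z hz
    exact (differentiableAt_const _).mul
      ((((differentiableAt_const (1:ℂ)).sub ((differentiableAt_const _).mul differentiableAt_id)).inv
        (hne z hz)).mul (hg z hz))
  -- Cauchy integral formula for the first piece
  have hg' : DiffContOnCl ℂ g (Metric.ball (0:ℂ) 1) := by
    apply DifferentiableOn.diffContOnCl
    rw [closure_ball (0:ℂ) one_ne_zero]
    exact fun z hz => (hg z hz).differentiableWithinAt
  have h₁ : (∮ z in C(0, 1), (z - a)⁻¹ • g z) = (2 * ↑π * Complex.I) • g a :=
    hg'.circleIntegral_sub_inv_smul (by simpa [Metric.mem_ball, Complex.dist_eq] using ha)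
  have h₂ : (∮ z in C(0, 1), f₂ z) = 0 := by
    apply circleIntegral_eq_zero_of_differentiable_on_off_countable zero_le_one
      Set.countable_empty
      (fun z hz => (hd₂ z hz).continuousAt.continuousWithinAt)
      (fun z hz => hd₂ z (Metric.ball_subset_closedBall hz.1))
  have int1 : CircleIntegrable (fun z => (z - a)⁻¹ • g z) 0 1 := by
    apply ContinuousOn.circleIntegrable zero_le_one
    intro z hz
    have h1 : ‖z‖ = 1 := hsphere z hz
    exact (((continuousAt_id.sub continuousAt_const).inv₀ (hza z h1)).smul
      (hg z (hzmem z h1)).continuousAt).continuousWithinAt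
  have int2 : CircleIntegrable f₂ 0 1 := by
    apply ContinuousOn.circleIntegrable zero_le_one
    intro z hz
    have h1 : ‖z‖ = 1 := hsphere z hz
    exact ((hd₂ z (hzmem z h1)).continuousAt).continuousWithinAt
  have hadd : (∮ z in C(0, 1), ((z - a)⁻¹ • g z + f₂ z)) = (2 * ↑π * Complex.I) • g a := by
    have hsplit : (∮ z in C(0, 1), ((z - a)⁻¹ • g z + f₂ z))
        = (∮ z in C(0, 1), (z - a)⁻¹ • g z) + ∮ z in C(0, 1), f₂ z := by
      simp only [circleIntegral, smul_add]
      exact intervalIntegral.integral_add int1.out int2.out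
    rw [hsplit, h₁, h₂, add_zero]
  -- the key pointwise identity
  have key : ∀ θ : ℝ,
      deriv (circleMap 0 1) θ • ((circleMap 0 1 θ - a)⁻¹ • g (circleMap 0 1 θ) + f₂ (circleMap 0 1 θ))
        = Complex.I * ((((1 - ‖a‖ ^ 2) / ‖Complex.exp (θ * Complex.I) - a‖ ^ 2 : ℝ) : ℂ)
            * g (Complex.exp (θ * Complex.I))) := by
    intro θ
    have hcm : circleMap 0 1 θ = Complex.exp (θ * Complex.I) := by
      simp [circleMap]
    set z : ℂ := Complex.exp (θ * Complex.I) with hzdef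
    have hz : ‖z‖ = 1 := Complex.norm_exp_ofReal_mul_I θ
    have hz0 : z ≠ 0 := by
      intro h; rw [h] at hz; simp at hz
    have hza' : z - a ≠ 0 := hza z hz
    have hne' : 1 - (starRingEnd ℂ) a * z ≠ 0 := hne z (hzmem z hz)
    have hcz : (starRingEnd ℂ) z * z = 1 := by
      rw [mul_comm, Complex.mul_conj]
      norm_cast
      rw [← Complex.sq_norm, hz]
      norm_num
    have hconj_ne : (starRingEnd ℂ) z - (starRingEnd ℂ) a ≠ 0 := by
      rw [← map_sub]
      intro h
      apply hza'
      have := congrArg (starRingEnd ℂ) h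
      simpa using this
    have habs2 : ((‖z - a‖ ^ 2 : ℝ) : ℂ) = (z - a) * ((starRingEnd ℂ) z - (starRingEnd ℂ) a) := by
      have h := Complex.mul_conj (z - a)
      rw [map_sub] at h
      rw [h]
      norm_cast
      rw [Complex.sq_norm]
    have ha2 : ((1 - ‖a‖ ^ 2 : ℝ) : ℂ) = 1 - (starRingEnd ℂ) a * a := by
      have h5 : ((‖a‖ : ℂ)) ^ 2 = (starRingEnd ℂ) a * a := by
        rw [← Complex.ofReal_pow, Complex.sq_norm a,
          show ((Complex.normSq a : ℝ) : ℂ) = a * (starRingEnd ℂ) a from (Complex.mul_conj a).symm]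
        ring
      push_cast
      rw [h5]
    have keyid : z * ((z - a)⁻¹ + (starRingEnd ℂ) a * (1 - (starRingEnd ℂ) a * z)⁻¹)
        = (((1 - ‖a‖ ^ 2) / ‖z - a‖ ^ 2 : ℝ) : ℂ) := by
      rw [Complex.ofReal_div, habs2, ha2]
      have hne2 : 1 - z * (starRingEnd ℂ) a ≠ 0 := by rwa [mul_comm]
      field_simp
      ring_nf
      linear_combination (1 - (starRingEnd ℂ) a * a) * hcz
    rw [deriv_circleMap, hcm]
    simp only [smul_eq_mul, hf₂]
    rw [← keyid]
    ring
  have hIeq : Complex.I * ∫ θ in (0:ℝ)..(2*π),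
      ((((1 - ‖a‖ ^ 2) / ‖Complex.exp (θ * Complex.I) - a‖ ^ 2 : ℝ) : ℂ)
        * g (Complex.exp (θ * Complex.I)))
      = Complex.I * (((2 * π : ℝ) : ℂ) * g a) := by
    rw [← intervalIntegral.integral_const_mul]
    rw [← intervalIntegral.integral_congr (fun θ _ => key θ)]
    rw [show (∫ θ in (0:ℝ)..(2*π), deriv (circleMap 0 1) θ •
        ((circleMap 0 1 θ - a)⁻¹ • g (circleMap 0 1 θ) + f₂ (circleMap 0 1 θ)))
      = ∮ z in C(0, 1), ((z - a)⁻¹ • g z + f₂ z) from rfl]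
    rw [hadd]
    simp only [smul_eq_mul]
    push_cast
    ring
  exact mul_left_cancel₀ Complex.I_ne_zero hIeq

lemma my_exp_ne (b : ℂ) (hb : ‖b‖ ≠ 1) (θ : ℝ) :
    Complex.exp (θ * Complex.I) - b ≠ 0 := by
  intro h
  rw [sub_eq_zero] at h
  have h2 := Complex.norm_exp_ofReal_mul_I θ
  rw [h] at h2
  exact hb h2

lemma my_cont_aux (a : ℂ) (ha : ‖a‖ < 1) :
    Continuous fun θ : ℝ =>
      ((1 - ‖a‖ ^ 2) / ‖Complex.exp (θ * Complex.I) - a‖ ^ 2 : ℝ) := by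
  have hne : ∀ θ : ℝ, ‖Complex.exp (θ * Complex.I) - a‖ ^ 2 ≠ 0 := by
    intro θ
    exact pow_ne_zero 2 (norm_ne_zero_iff.mpr (my_exp_ne a (ne_of_lt ha) θ))
  apply Continuous.div continuous_const ?_ hne
  apply Continuous.pow
  apply continuous_norm.comp
  exact (Complex.continuous_exp.comp (by continuity)).sub continuous_const

lemma my_main_gt (a b : ℂ) (ha : ‖a‖ < 1) (hb : 1 < ‖b‖) :
    ∫ θ in (0:ℝ)..(2*π),
        Real.log (‖Complex.exp (θ * Complex.I) - b‖) *
          ((2*π)⁻¹ * (1 - ‖a‖ ^ 2) / ‖Complex.exp (θ * Complex.I) - a‖ ^ 2)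
      = Real.log (‖a - b‖) := by
  have hb0 : b ≠ 0 := by
    intro h; rw [h] at hb; simp only [norm_zero] at hb; linarith
  have hbz : ∀ z : ℂ, ‖z‖ ≤ 1 → b - z ≠ 0 := by
    intro z hz h
    rw [sub_eq_zero] at h
    rw [← h] at hz
    linarith
  set g : ℂ → ℂ := fun z => Complex.log (1 - z * b⁻¹) with hgdef
  have hslit : ∀ z : ℂ, ‖z‖ ≤ 1 → (1 - z * b⁻¹) ∈ Complex.slitPlane := by
    intro z hz
    have h1 : (1 - z * b⁻¹) = 1 + (-(z * b⁻¹)) := by ring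
    rw [h1]
    apply Complex.mem_slitPlane_of_norm_lt_one
    rw [norm_neg]
    have h2 : ‖z * b⁻¹‖ = ‖z‖ * (‖b‖)⁻¹ := by
      simp [norm_mul]
    rw [h2]
    have hbpos : (0:ℝ) < ‖b‖ := by linarith
    calc ‖z‖ * (‖b‖)⁻¹ ≤ 1 * (‖b‖)⁻¹ :=
          mul_le_mul_of_nonneg_right hz (by positivity)
      _ < 1 := by rw [one_mul]; exact inv_lt_one_of_one_lt₀ hb
  have hgdiff : ∀ z ∈ Metric.closedBall (0:ℂ) 1, DifferentiableAt ℂ g z := by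
    intro z hz
    have hz1 : ‖z‖ ≤ 1 := by simpa [Complex.dist_eq] using hz
    exact DifferentiableAt.clog
      ((differentiableAt_const _).sub (differentiableAt_id.mul (differentiableAt_const _)))
      (hslit z hz1)
  have hre : ∀ z : ℂ, ‖z‖ ≤ 1 →
      (g z).re = Real.log (‖z - b‖) - Real.log (‖b‖) := by
    intro z hz
    have h1 : (1 : ℂ) - z * b⁻¹ = (b - z) * b⁻¹ := by
      field_simp
    rw [hgdef]
    simp only
    rw [Complex.log_re, h1, norm_mul, norm_inv]
    rw [Real.log_mul (by simpa [sub_eq_zero] using hbz z hz) (by positivity), Real.log_inv]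
    rw [show ‖z - b‖ = ‖b - z‖ from by
      rw [← norm_neg (b - z)]; ring_nf]
    ring
  have HP := my_poisson a ha g hgdiff
  have HP1 := my_poisson a ha (fun _ => 1) (fun z _ => differentiableAt_const _)
  simp only [mul_one] at HP1
  have hexpc : Continuous fun θ : ℝ => Complex.exp (θ * Complex.I) :=
    Complex.continuous_exp.comp (by continuity)
  have hgcont : Continuous fun θ : ℝ => g (Complex.exp (θ * Complex.I)) := by
    rw [continuous_iff_continuousAt]
    intro θ
    exact ContinuousAt.comp
      (hgdiff _ (by simp [Complex.dist_eq, Complex.norm_exp_ofReal_mul_I θ])).continuousAt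
      hexpc.continuousAt
  have hPcont := my_cont_aux a ha
  have hint : IntervalIntegrable (fun θ : ℝ =>
      (((1 - ‖a‖ ^ 2) / ‖Complex.exp (θ * Complex.I) - a‖ ^ 2 : ℝ) : ℂ)
        * g (Complex.exp (θ * Complex.I))) volume 0 (2*π) :=
    (((Complex.continuous_ofReal.comp hPcont)).mul hgcont).intervalIntegrable _ _
  have hint1 : IntervalIntegrable (fun θ : ℝ =>
      (((1 - ‖a‖ ^ 2) / ‖Complex.exp (θ * Complex.I) - a‖ ^ 2 : ℝ) : ℂ))
      volume 0 (2*π) :=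
    ((Complex.continuous_ofReal.comp hPcont)).intervalIntegrable _ _
  have hre_int := Complex.reCLM.intervalIntegral_comp_comm hint
  rw [HP] at hre_int
  simp only [Complex.reCLM_apply, Complex.re_ofReal_mul, Complex.ofReal_re] at hre_int
  have hre1_int := Complex.reCLM.intervalIntegral_comp_comm hint1
  rw [HP1] at hre1_int
  simp only [Complex.reCLM_apply, Complex.ofReal_re] at hre1_int
  -- hre_int : ∫ P θ * (g z).re = 2π * (g a).re ; hre1_int : ∫ P = 2π
  have hre_int' : ∫ θ in (0:ℝ)..(2*π),
      ((1 - ‖a‖ ^ 2) / ‖Complex.exp (θ * Complex.I) - a‖ ^ 2) *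
        (Real.log (‖Complex.exp (θ * Complex.I) - b‖) - Real.log (‖b‖))
      = 2 * π * (Real.log (‖a - b‖) - Real.log (‖b‖)) := by
    have e1 : ∀ θ : ℝ, (g (Complex.exp (θ * Complex.I))).re
        = Real.log (‖Complex.exp (θ * Complex.I) - b‖) - Real.log (‖b‖) :=
      fun θ => hre _ (le_of_eq (Complex.norm_exp_ofReal_mul_I θ))
    have e2 : (g a).re = Real.log (‖a - b‖) - Real.log (‖b‖) :=
      hre a ha.le
    have efun : (fun θ : ℝ =>
        ((1 - ‖a‖ ^ 2) / ‖Complex.exp (θ * Complex.I) - a‖ ^ 2) *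
          (Real.log (‖Complex.exp (θ * Complex.I) - b‖) - Real.log (‖b‖)))
        = fun θ : ℝ =>
        ((1 - ‖a‖ ^ 2) / ‖Complex.exp (θ * Complex.I) - a‖ ^ 2) *
          (g (Complex.exp (θ * Complex.I))).re := by
      funext θ
      rw [e1 θ]
    rw [efun, hre_int, e2]
  set c := Real.log (‖b‖) with hc
  set P : ℝ → ℝ := fun θ =>
    ((1 - ‖a‖ ^ 2) / ‖Complex.exp (θ * Complex.I) - a‖ ^ 2) with hP
  set L : ℝ → ℝ := fun θ => Real.log (‖Complex.exp (θ * Complex.I) - b‖) with hL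
  have hLcont : Continuous fun θ : ℝ => P θ * (L θ - c) := by
    apply hPcont.mul
    apply Continuous.sub ?_ continuous_const
    rw [continuous_iff_continuousAt]
    intro θ
    exact ContinuousAt.comp (g := Real.log)
      (f := fun θ : ℝ => ‖Complex.exp (θ * Complex.I) - b‖)
      (Real.continuousAt_log (norm_ne_zero_iff.mpr (my_exp_ne b (ne_of_gt hb) θ)))
      ((continuous_norm.comp (hexpc.sub continuous_const)).continuousAt)
  have hsplit : EqOn (fun θ : ℝ => L θ *
      ((2*π)⁻¹ * (1 - ‖a‖ ^ 2) / ‖Complex.exp (θ * Complex.I) - a‖ ^ 2))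
      (fun θ : ℝ => (2*π)⁻¹ * (P θ * (L θ - c)) + ((2*π)⁻¹ * c) * P θ)
      (Set.uIcc (0:ℝ) (2*π)) := by
    intro θ _
    simp only [hP, hL]
    ring
  rw [intervalIntegral.integral_congr hsplit]
  rw [intervalIntegral.integral_add ((hLcont.intervalIntegrable _ _).const_mul _)
    ((hPcont.intervalIntegrable _ _).const_mul _)]
  rw [intervalIntegral.integral_const_mul, intervalIntegral.integral_const_mul, hre_int', hre1_int]
  have hπ : π ≠ 0 := Real.pi_ne_zero
  field_simp
  ring

lemma my_exp_eq_null (b : ℂ) (hb : ‖b‖ = 1) :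
    (volume : Measure ℝ) {θ : ℝ | Complex.exp (θ * Complex.I) = b} = 0 := by
  apply Set.Countable.measure_zero
  apply Set.Countable.mono ?_ (Set.countable_range (fun n : ℤ => Complex.arg b + n * (2*π)))
  intro θ hθ
  simp only [Set.mem_setOf_eq] at hθ
  have hbexp : Complex.exp ((Complex.arg b : ℂ) * Complex.I) = b := by
    have h := Complex.norm_mul_exp_arg_mul_I b
    rwa [hb, Complex.ofReal_one, one_mul] at h
  rw [← hbexp, Complex.exp_eq_exp_iff_exists_int] at hθ
  obtain ⟨n, hn⟩ := hθ
  refine ⟨n, ?_⟩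
  have h2 : ((θ : ℂ)) * Complex.I = ((Complex.arg b + n * (2*π) : ℝ) : ℂ) * Complex.I := by
    push_cast
    rw [hn]
    ring
  have h3 := mul_right_cancel₀ Complex.I_ne_zero h2
  have h4 : θ = Complex.arg b + n * (2*π) := by exact_mod_cast h3
  rw [h4]

lemma my_main_ge (a b : ℂ) (ha : ‖a‖ < 1) (hb : 1 ≤ ‖b‖) :
    ∫ θ in (0:ℝ)..(2*π),
        Real.log (‖Complex.exp (θ * Complex.I) - b‖) *
          ((2*π)⁻¹ * (1 - ‖a‖ ^ 2) / ‖Complex.exp (θ * Complex.I) - a‖ ^ 2)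
      = Real.log (‖a - b‖) := by
  rcases lt_or_eq_of_le hb with hb1 | hb1
  · exact my_main_gt a b ha hb1
  -- boundary case : |b| = 1
  have hb1 : ‖b‖ = 1 := hb1.symm
  have h2π : (0:ℝ) ≤ 2*π := by positivity
  set A := ‖a‖ ^ 2 with hA
  set C : ℝ → ℝ := fun θ =>
    (2*π)⁻¹ * (1 - A) / ‖Complex.exp (θ * Complex.I) - a‖ ^ 2 with hC
  have hCcont : Continuous C := by
    apply Continuous.div continuous_const
    · exact (continuous_norm.comp ((Complex.continuous_exp.comp (Complex.continuous_ofReal.mul continuous_const)).sub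
        continuous_const)).pow 2
    · exact fun θ => pow_ne_zero 2 (norm_ne_zero_iff.mpr (my_exp_ne a (ne_of_lt ha) θ))
  have hAlt : A < 1 := by
    rw [hA, ← one_pow 2]
    exact pow_lt_pow_left₀ ha (norm_nonneg _) two_ne_zero
  have hCnonneg : ∀ θ, 0 ≤ C θ := by
    intro θ
    apply div_nonneg ?_ (by positivity)
    exact mul_nonneg (by positivity) (by linarith)
  set M : ℝ := (2*π)⁻¹ * (1 - A) / (1 - ‖a‖)^2 with hM
  have hCleM : ∀ θ, C θ ≤ M := by
    intro θ
    rw [hC, hM]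
    apply div_le_div_of_nonneg_left (mul_nonneg (by positivity) (by linarith))
      (pow_pos (by linarith) 2) ?_
    · have h5 : 1 - ‖a‖ ≤ ‖Complex.exp (θ * Complex.I) - a‖ := by
        have := norm_sub_norm_le (Complex.exp (θ * Complex.I)) a
        simpa [Complex.norm_exp_ofReal_mul_I θ] using this
      calc (1 - ‖a‖)^2 ≤ ‖Complex.exp (θ * Complex.I) - a‖ ^ 2 :=
            pow_le_pow_left₀ (by linarith) h5 2
        _ = ‖Complex.exp (θ * Complex.I) - a‖ ^ 2 := rfl
  -- the sequence
  set t : ℕ → ℝ := fun n => 1 + ((n:ℝ)+1)⁻¹ with ht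
  have ht1 : ∀ n, 1 < t n := by
    intro n
    have : (0:ℝ) < ((n:ℝ)+1)⁻¹ := by positivity
    rw [ht]; linarith
  have ht2 : ∀ n, t n ≤ 2 := by
    intro n
    have h1 : ((n:ℝ)+1)⁻¹ ≤ 1 := by
      rw [inv_le_one_iff₀]
      right
      have : (0:ℝ) ≤ (n:ℝ) := Nat.cast_nonneg n
      linarith
    rw [ht]; linarith
  set bs : ℕ → ℂ := fun n => ((t n : ℝ) : ℂ) * b with hbs
  have habsn : ∀ n, ‖bs n‖ = t n := by
    intro n
    rw [hbs]
    simp only [norm_mul, Complex.norm_real, Real.norm_eq_abs, hb1, mul_one]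
    exact abs_of_pos (by linarith [ht1 n])
  have hgt : ∀ n, 1 < ‖bs n‖ := fun n => (habsn n) ▸ ht1 n
  have Hn : ∀ n, ∫ θ in (0:ℝ)..(2*π),
      Real.log (‖Complex.exp (θ * Complex.I) - bs n‖) *
        ((2*π)⁻¹ * (1 - ‖a‖ ^ 2) / ‖Complex.exp (θ * Complex.I) - a‖ ^ 2)
      = Real.log (‖a - bs n‖) := fun n => my_main_gt a (bs n) ha (hgt n)
  -- a.e. facts
  have hEnull : (volume : Measure ℝ) {θ : ℝ | Complex.exp (θ * Complex.I) = b} = 0 :=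
    my_exp_eq_null b hb1
  have hae : ∀ᵐ θ : ℝ ∂volume, Complex.exp (θ * Complex.I) ≠ b := by
    rw [ae_iff]
    simpa using hEnull
  -- dominated convergence
  set μ : Measure ℝ := volume.restrict (Set.Ioc 0 (2*π)) with hμ
  set F : ℕ → ℝ → ℝ := fun n θ =>
    Real.log (‖Complex.exp (θ * Complex.I) - bs n‖) * C θ with hF
  set f : ℝ → ℝ := fun θ =>
    Real.log (‖Complex.exp (θ * Complex.I) - b‖) * C θ with hf
  set G : ℝ → ℝ := fun θ =>
    (|Real.log (‖Complex.exp (θ * Complex.I) - b‖)| + Real.log 3) * M with hG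
  have htend : Tendsto (fun n => ∫ θ, F n θ ∂μ) atTop (𝓝 (∫ θ, f θ ∂μ)) := by
    apply MeasureTheory.tendsto_integral_of_dominated_convergence G
    · intro n
      apply Continuous.aestronglyMeasurable
      apply Continuous.mul ?_ hCcont
      rw [continuous_iff_continuousAt]
      intro θ
      exact ContinuousAt.comp (g := Real.log)
        (f := fun θ : ℝ => ‖Complex.exp (θ * Complex.I) - bs n‖)
        (Real.continuousAt_log (norm_ne_zero_iff.mpr (my_exp_ne (bs n) (ne_of_gt (hgt n)) θ)))
        ((continuous_norm.comp ((Complex.continuous_exp.comp (Complex.continuous_ofReal.mul continuous_const)).sub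
          continuous_const)).continuousAt)
    · -- integrable bound
      have h1 := ((my_key_integrable hb1).abs.add
        (_root_.intervalIntegrable_const (c := Real.log 3))).mul_const M
      rw [intervalIntegrable_iff, uIoc_of_le h2π] at h1
      exact h1
    · -- bound
      intro n
      apply ae_restrict_of_ae
      filter_upwards [hae] with θ hθ
      have hzb : Complex.exp (θ * Complex.I) - b ≠ 0 := sub_ne_zero.2 hθ
      set z := Complex.exp (θ * Complex.I) with hz
      have hzabs : ‖z‖ = 1 := Complex.norm_exp_ofReal_mul_I θ
      have hr : 0 < ‖z - b‖ := norm_pos_iff.mpr hzb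
      have hrn : 0 < ‖z - bs n‖ := norm_pos_iff.mpr (sub_ne_zero.2 (by
        intro h
        have := habsn n
        rw [← h, hzabs] at this
        linarith [ht1 n]))
      -- |z - b| ≤ |z - bs n|
      have hmono : ‖z - b‖ ≤ ‖z - bs n‖ := by
        have hsq : ‖z - b‖ ^ 2 ≤ ‖z - bs n‖ ^ 2 := by
          rw [Complex.sq_norm, Complex.sq_norm, hbs]
          simp only
          have e1 : Complex.normSq (z - b) = 1 - 2 * (z * (starRingEnd ℂ) b).re + 1 := by
            rw [Complex.normSq_sub]
            have : Complex.normSq z = 1 := by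
              rw [← Complex.sq_norm, hzabs]; norm_num
            have hb2 : Complex.normSq b = 1 := by
              rw [← Complex.sq_norm, hb1]; norm_num
            rw [this, hb2]; ring
          have e2 : Complex.normSq (z - ((t n : ℝ):ℂ) * b)
              = 1 - 2 * (t n) * (z * (starRingEnd ℂ) b).re + (t n)^2 := by
            rw [Complex.normSq_sub]
            have h3 : Complex.normSq z = 1 := by
              rw [← Complex.sq_norm, hzabs]; norm_num
            have h4 : Complex.normSq (((t n : ℝ):ℂ) * b) = (t n)^2 := by
              rw [Complex.normSq_mul]
              have : Complex.normSq b = 1 := by rw [← Complex.sq_norm, hb1]; norm_num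
              rw [this, Complex.normSq_ofReal]; ring
            have h5 : (z * (starRingEnd ℂ) (((t n : ℝ):ℂ) * b)).re
                = t n * (z * (starRingEnd ℂ) b).re := by
              rw [map_mul, Complex.conj_ofReal]
              rw [show z * (((t n : ℝ):ℂ) * (starRingEnd ℂ) b)
                = ((t n : ℝ):ℂ) * (z * (starRingEnd ℂ) b) from by ring]
              rw [Complex.re_ofReal_mul]
            rw [h3, h4, h5]; ring
          rw [e1, e2]
          have hcle : (z * (starRingEnd ℂ) b).re ≤ 1 := by
            have h6 := Complex.abs_re_le_norm (z * (starRingEnd ℂ) b)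
            have h7 : ‖z * (starRingEnd ℂ) b‖ = 1 := by
              rw [norm_mul, Complex.norm_conj, hzabs, hb1]; norm_num
            rw [h7] at h6
            exact (abs_le.1 h6).2
          nlinarith [ht1 n]
        exact le_of_pow_le_pow_left₀ two_ne_zero (norm_nonneg _) hsq
      have hup : ‖z - bs n‖ ≤ 3 := by
        calc ‖z - bs n‖ ≤ ‖z‖ + ‖bs n‖ := by
              simpa [sub_eq_add_neg] using norm_add_le z (-(bs n))
          _ = 1 + t n := by rw [hzabs, habsn n]
          _ ≤ 3 := by linarith [ht2 n]
      have hlogbound : |Real.log (‖z - bs n‖)|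
          ≤ |Real.log (‖z - b‖)| + Real.log 3 := by
        have hup' : Real.log (‖z - bs n‖) ≤ Real.log 3 :=
          Real.log_le_log hrn hup
        have hlow : Real.log (‖z - b‖) ≤ Real.log (‖z - bs n‖) :=
          Real.log_le_log hr hmono
        have hlog3 : (0:ℝ) ≤ Real.log 3 := Real.log_nonneg (by norm_num)
        rcases le_or_gt 0 (Real.log (‖z - bs n‖)) with h | h
        · rw [_root_.abs_of_nonneg h]
          have := abs_nonneg (Real.log (‖z - b‖))
          linarith
        · rw [_root_.abs_of_neg h]
          have := neg_abs_le (Real.log (‖z - b‖))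
          linarith
      rw [hF, hG]
      simp only
      rw [Real.norm_eq_abs, _root_.abs_mul, _root_.abs_of_nonneg (hCnonneg θ)]
      apply mul_le_mul hlogbound (hCleM θ) (hCnonneg θ)
      have := abs_nonneg (Real.log (‖z - b‖))
      have hlog3 : (0:ℝ) ≤ Real.log 3 := Real.log_nonneg (by norm_num)
      linarith
    · -- pointwise limit
      apply ae_restrict_of_ae
      filter_upwards [hae] with θ hθ
      have hzb : Complex.exp (θ * Complex.I) - b ≠ 0 := sub_ne_zero.2 hθ
      have htt : Tendsto t atTop (𝓝 1) := by
        rw [ht]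
        have h0 : Tendsto (fun n : ℕ => ((n:ℝ)+1)⁻¹) atTop (𝓝 0) :=
          tendsto_one_div_add_atTop_nhds_zero_nat.congr (by intro n; rw [one_div])
        simpa using tendsto_const_nhds.add h0
      have hbt : Tendsto (fun n => bs n) atTop (𝓝 b) := by
        rw [hbs]
        have h1 : Tendsto (fun n => ((t n : ℝ) : ℂ)) atTop (𝓝 1) := by
          have := (Complex.continuous_ofReal.tendsto 1).comp htt
          simpa [Function.comp_def] using this
        simpa using h1.mul_const b
      have habst : Tendsto (fun n => ‖Complex.exp (θ * Complex.I) - bs n‖) atTop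
          (𝓝 (‖Complex.exp (θ * Complex.I) - b‖)) :=
        (continuous_norm.tendsto _).comp (tendsto_const_nhds.sub hbt)
      have hlogt : Tendsto (fun n => Real.log (‖Complex.exp (θ * Complex.I) - bs n‖))
          atTop (𝓝 (Real.log (‖Complex.exp (θ * Complex.I) - b‖))) :=
        ((Real.continuousAt_log (norm_ne_zero_iff.mpr hzb)).tendsto).comp habst
      exact hlogt.mul_const (C θ)
  -- identify the limit
  have hIoc : ∀ n, ∫ θ, F n θ ∂μ = Real.log (‖a - bs n‖) := by
    intro n
    rw [← Hn n, intervalIntegral.integral_of_le h2π]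
  have htend2 : Tendsto (fun n => Real.log (‖a - bs n‖)) atTop
      (𝓝 (Real.log (‖a - b‖))) := by
    have hab : a - b ≠ 0 := by
      intro h
      rw [sub_eq_zero] at h
      rw [h, hb1] at ha
      linarith
    have htt : Tendsto t atTop (𝓝 1) := by
      rw [ht]
      have h0 : Tendsto (fun n : ℕ => ((n:ℝ)+1)⁻¹) atTop (𝓝 0) :=
        tendsto_one_div_add_atTop_nhds_zero_nat.congr (by intro n; rw [one_div])
      simpa using tendsto_const_nhds.add h0
    have hbt : Tendsto (fun n => bs n) atTop (𝓝 b) := by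
      rw [hbs]
      have h1 : Tendsto (fun n => ((t n : ℝ) : ℂ)) atTop (𝓝 1) := by
        have := (Complex.continuous_ofReal.tendsto 1).comp htt
        simpa [Function.comp_def] using this
      simpa using h1.mul_const b
    exact ((Real.continuousAt_log (norm_ne_zero_iff.mpr hab)).tendsto).comp
      ((continuous_norm.tendsto _).comp (tendsto_const_nhds.sub hbt))
  have htend3 : Tendsto (fun n => ∫ θ, F n θ ∂μ) atTop (𝓝 (Real.log (‖a - b‖))) := by
    rw [funext hIoc]
    exact htend2
  have hfinal : ∫ θ, f θ ∂μ = Real.log (‖a - b‖) :=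
    tendsto_nhds_unique htend htend3
  rw [intervalIntegral.integral_of_le h2π]
  exact hfinal

lemma my_circlePt_eq (θ : ℝ) :
    circlePt θ = Complex.orthonormalBasisOneI.repr (Complex.exp (θ * Complex.I)) := by
  ext i
  rw [Complex.orthonormalBasisOneI_repr_apply]
  fin_cases i <;> simp [circlePt, Complex.exp_ofReal_mul_I_re, Complex.exp_ofReal_mul_I_im]

end MyAux

theorem stmt13 (x₀ y : E2) (hx₀ : ‖x₀‖ < 1) (hy : 1 ≤ ‖y‖) :
    ∫ x, Real.log (dist x y) * ((2 * π)⁻¹ * (1 - ‖x₀‖^2) / dist x x₀ ^ 2) ∂arcLength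
      = Real.log (dist x₀ y) := by
  set ψ := Complex.orthonormalBasisOneI.repr with hψ
  set a : ℂ := ψ.symm x₀ with ha
  set b : ℂ := ψ.symm y with hbdef
  have hax : ψ a = x₀ := ψ.apply_symm_apply x₀
  have hby : ψ b = y := ψ.apply_symm_apply y
  have hdist : ∀ (z : ℂ) (w : E2), dist ((ψ : ℂ ≃ₗᵢ[ℝ] E2) z) w = ‖z - ψ.symm w‖ := by
    intro z w
    conv_lhs => rw [← ψ.apply_symm_apply w]
    rw [ψ.dist_map, Complex.dist_eq]
  have hnorma : ‖a‖ = ‖x₀‖ := by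
    rw [← hax, ψ.norm_map]
  have hnormb : ‖b‖ = ‖y‖ := by
    rw [← hby, ψ.norm_map]
  have hmeas : Measurable fun x : E2 =>
      Real.log (dist x y) * ((2 * π)⁻¹ * (1 - ‖x₀‖^2) / dist x x₀ ^ 2) := by
    apply Measurable.mul
    · exact Real.measurable_log.comp (continuous_id.dist continuous_const).measurable
    · exact Measurable.div measurable_const
        (((continuous_id.dist continuous_const).pow 2).measurable)
  have hcont : Continuous circlePt := by
    have : (circlePt : ℝ → E2) = fun θ : ℝ => ψ (Complex.exp ((θ:ℂ) * Complex.I)) :=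
      funext my_circlePt_eq
    rw [this]
    exact ψ.continuous.comp (Complex.continuous_exp.comp
      (Complex.continuous_ofReal.mul continuous_const))
  rw [arcLength, MeasureTheory.integral_map hcont.measurable.aemeasurable
    hmeas.aestronglyMeasurable]
  have h2π : (0:ℝ) ≤ 2*π := by positivity
  rw [MeasureTheory.integral_Ico_eq_integral_Ioo, ← MeasureTheory.integral_Ioc_eq_integral_Ioo,
    ← intervalIntegral.integral_of_le h2π]
  have hre : ∀ θ : ℝ, Real.log (dist (circlePt θ) y) *
      ((2 * π)⁻¹ * (1 - ‖x₀‖^2) / dist (circlePt θ) x₀ ^ 2)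
      = Real.log (‖Complex.exp (θ * Complex.I) - b‖) *
        ((2*π)⁻¹ * (1 - ‖a‖ ^ 2) / ‖Complex.exp (θ * Complex.I) - a‖ ^ 2) := by
    intro θ
    rw [my_circlePt_eq θ]
    rw [hdist, hdist, hnorma]
  rw [intervalIntegral.integral_congr (fun θ _ => hre θ)]
  have hfinal := my_main_ge a b (by rw [hnorma]; exact hx₀) (by rw [hnormb]; exact hy)
  rw [hfinal]
  rw [show dist x₀ y = ‖a - b‖ from by rw [← hax, hdist, ha]]
end
end

section
/- For absolutely continuous ν ∈ M with bounded compactly supported density ρ and zero total mass, and x outside the support of ρ, the integral over t of ∫ p_t(x,y) ρ(y) dy converges and equals ∫ g(x,y) ρ(y) dy = -(1/π) ∫ log‖x-y‖ ρ(y) dy; equivalently E_x ∫₀^∞ ρ(W_t) dt = ∫ g(x,y) ρ(y) dy when interpreted as the stated iterated integral. -/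
open MeasureTheory Real

noncomputable section

open Set Filter Topology


-- bound: (t^2)⁻¹ * exp(-(s/t)) ≤ 2/s^2 for 0<s, 0<t
lemma auxBound {s t : ℝ} (hs : 0 < s) (ht : 0 < t) :
    (t^2)⁻¹ * Real.exp (-(s/t)) ≤ 2 / s^2 := by
  have hu : 0 < s / t := div_pos hs ht
  have h1 : (s/t)^2/2 ≤ Real.exp (s/t) := by
    nlinarith [Real.quadratic_le_exp_of_nonneg hu.le]
  have h2 : (s/t)^2 * Real.exp (-(s/t)) ≤ 2 := by
    rw [Real.exp_neg]
    rw [mul_inv_le_iff₀ (Real.exp_pos _)]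
    nlinarith
  have h3 : (t^2)⁻¹ = (s/t)^2 / s^2 := by
    field_simp
  rw [h3, div_mul_eq_mul_div, div_le_div_iff₀ (by positivity) (by positivity)]
  nlinarith [sq_nonneg s]

lemma auxMeas (s : ℝ) : Measurable (fun t : ℝ => (t^2)⁻¹ * Real.exp (-(s/t))) := by
  have h1 : Measurable fun t : ℝ => -(s/t) := by
    simp only [div_eq_mul_inv]
    exact (measurable_inv.const_mul s).neg
  exact ((measurable_id.pow_const 2).inv).mul (Real.measurable_exp.comp h1)

lemma intA {s : ℝ} (hs : 0 < s) :
    IntegrableOn (fun t => (t^2)⁻¹ * Real.exp (-(s/t))) (Ioi 0) := by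
  have h1 : IntegrableOn (fun t => (t^2)⁻¹ * Real.exp (-(s/t))) (Ioc 0 1) := by
    apply Integrable.mono' (g := fun _ => 2/s^2)
      (integrableOn_const (by simp [Real.volume_Ioc]))
      ((auxMeas s).aestronglyMeasurable)
    rw [ae_restrict_iff' measurableSet_Ioc]
    refine ae_of_all _ (fun t ht => ?_)
    rw [Real.norm_eq_abs, abs_of_nonneg (by positivity)]
    exact auxBound hs ht.1
  have h2 : IntegrableOn (fun t => (t^2)⁻¹ * Real.exp (-(s/t))) (Ioi 1) := by
    apply Integrable.mono' (integrableOn_Ioi_rpow_of_lt (by norm_num : (-2:ℝ) < -1) one_pos)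
      ((auxMeas s).aestronglyMeasurable)
    rw [ae_restrict_iff' measurableSet_Ioi]
    refine ae_of_all _ (fun t ht => ?_)
    have ht0 : (0:ℝ) < t := lt_trans one_pos ht
    rw [Real.norm_eq_abs, abs_of_nonneg (by positivity)]
    have he : Real.exp (-(s/t)) ≤ 1 := Real.exp_le_one_iff.2 (neg_nonpos.2 (by positivity))
    have : t ^ (-2:ℝ) = (t^2)⁻¹ := by
      rw [show (-2:ℝ) = -(2:ℕ) by norm_num, Real.rpow_neg ht0.le, Real.rpow_natCast]
    rw [this]
    nlinarith [inv_pos.2 (pow_pos ht0 2), Real.exp_pos (-(s/t))]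
  have := h1.union h2
  rwa [Ioc_union_Ioi_eq_Ioi (by norm_num : (0:ℝ) ≤ 1)] at this

lemma valA {s : ℝ} (hs : 0 < s) :
    ∫ t in Ioi (0:ℝ), (t^2)⁻¹ * Real.exp (-(s/t)) = 1/s := by
  set F : ℝ → ℝ := fun t => if t ≤ 0 then 0 else (1/s) * Real.exp (-(s/t)) with hF
  have hF0 : F 0 = 0 := by simp [hF]
  have hcont : ContinuousWithinAt F (Ici 0) 0 := by
    unfold ContinuousWithinAt
    rw [hF0]
    have hsub : Ici (0:ℝ) ⊆ Iic 0 ∪ Ioi 0 := fun t _ => le_or_gt t 0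
    refine Tendsto.mono_left ?_ (nhdsWithin_mono _ hsub)
    rw [nhdsWithin_union]
    rw [tendsto_sup]
    constructor
    · refine Tendsto.congr' ?_ tendsto_const_nhds
      filter_upwards [eventually_mem_nhdsWithin] with t ht
      simp [hF, ht.out]
    · have h1 : Tendsto (fun t : ℝ => -(s/t)) (nhdsWithin 0 (Ioi 0)) atBot := by
        have : Tendsto (fun t : ℝ => s/t) (nhdsWithin 0 (Ioi 0)) atTop := by
          simp only [div_eq_mul_inv]
          exact Tendsto.const_mul_atTop hs tendsto_inv_nhdsGT_zero
        exact tendsto_neg_atBot_iff.2 this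
      have h2 : Tendsto F (nhdsWithin 0 (Ioi 0)) (𝓝 ((1/s) * 0)) := by
        refine Tendsto.congr' ?_ (((Real.tendsto_exp_atBot).comp h1).const_mul (1/s))
        filter_upwards [eventually_mem_nhdsWithin] with t ht
        simp [hF, not_le.2 ht.out, Function.comp]
      simpa using h2
  have hderiv : ∀ t ∈ Ioi (0:ℝ), HasDerivAt F ((t^2)⁻¹ * Real.exp (-(s/t))) t := by
    intro t ht
    have ht0 : (0:ℝ) < t := ht
    have heq : F =ᶠ[𝓝 t] fun u => (1/s) * Real.exp (-(s/u)) := by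
      filter_upwards [Ioi_mem_nhds ht0] with u hu
      simp [hF, not_le.2 (mem_Ioi.1 hu)]
    have hd : HasDerivAt (fun u : ℝ => (1/s) * Real.exp (-(s/u)))
        ((t^2)⁻¹ * Real.exp (-(s/t))) t := by
      have h1 : HasDerivAt (fun u : ℝ => -(s/u)) (s/t^2) t := by
        simpa [div_eq_mul_inv, Pi.neg_def] using ((hasDerivAt_inv ht0.ne').const_mul s).neg
      have h2 := (h1.exp).const_mul (1/s)
      refine h2.congr_deriv ?_
      field_simp
    exact hd.congr_of_eventuallyEq heq
  have htop : Tendsto F atTop (𝓝 (1/s)) := by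
    have h1 : Tendsto (fun t : ℝ => -(s/t)) atTop (𝓝 0) := by
      have := (tendsto_const_div_atTop_nhds_zero_nat (𝕜 := ℝ))
      have h2 : Tendsto (fun t : ℝ => s/t) atTop (𝓝 0) := tendsto_const_nhds.div_atTop tendsto_id
      simpa using h2.neg
    have h2 : Tendsto (fun t : ℝ => (1/s) * Real.exp (-(s/t))) atTop (𝓝 ((1/s) * Real.exp 0)) :=
      ((Real.continuous_exp.tendsto _).comp h1).const_mul _
    refine Tendsto.congr' ?_ (by simpa using h2)
    filter_upwards [eventually_gt_atTop 0] with t ht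
    simp [hF, not_le.2 ht]
  have := integral_Ioi_of_hasDerivAt_of_tendsto hcont hderiv (intA hs) htop
  rw [this, hF0, sub_zero]

-- |e^{-u} - e^{-v}| ≤ |u - v| * e^{-min u v}
lemma expDiff (u v : ℝ) :
    |Real.exp (-u) - Real.exp (-v)| ≤ |u - v| * Real.exp (-(min u v)) := by
  wlog huv : u ≤ v generalizing u v
  · have := this v u (le_of_not_ge huv)
    rwa [abs_sub_comm, abs_sub_comm v u, min_comm] at this
  rw [min_eq_left huv]
  have h1 : Real.exp (-v) ≤ Real.exp (-u) := Real.exp_le_exp.2 (by linarith)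
  rw [abs_of_nonneg (by linarith), abs_of_nonpos (by linarith)]
  have h2 : Real.exp (-v) = Real.exp (-u) * Real.exp (-(v-u)) := by
    rw [← Real.exp_add]; ring_nf
  rw [h2]
  have h3 : 1 - Real.exp (-(v-u)) ≤ v - u := by
    have := Real.add_one_le_exp (-(v-u))
    linarith
  have h4 : Real.exp (-u) * (1 - Real.exp (-(v-u))) ≤ Real.exp (-u) * (v - u) := by
    exact mul_le_mul_of_nonneg_left h3 (Real.exp_pos _).le
  nlinarith [Real.exp_pos (-u)]

lemma auxMeasB (a b : ℝ) :
    Measurable (fun t : ℝ => t⁻¹ * (Real.exp (-(a/t)) - Real.exp (-(b/t)))) := by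
  have h1 : ∀ c : ℝ, Measurable fun t : ℝ => Real.exp (-(c/t)) := by
    intro c
    simp only [div_eq_mul_inv]
    exact Real.measurable_exp.comp ((measurable_inv.const_mul c).neg)
  exact measurable_inv.mul ((h1 a).sub (h1 b))

lemma intB {a b : ℝ} (ha : 0 < a) (hb : 0 < b) :
    IntegrableOn (fun t => t⁻¹ * (Real.exp (-(a/t)) - Real.exp (-(b/t)))) (Ioi 0) := by
  have hm : 0 < min a b := lt_min ha hb
  apply Integrable.mono' ((intA hm).const_mul |a - b|) ((auxMeasB a b).aestronglyMeasurable)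
  rw [ae_restrict_iff' measurableSet_Ioi]
  refine ae_of_all _ (fun t ht => ?_)
  have ht0 : (0:ℝ) < t := ht
  rw [Real.norm_eq_abs, abs_mul, abs_of_nonneg (inv_nonneg.2 ht0.le)]
  have h1 : |Real.exp (-(a/t)) - Real.exp (-(b/t))| ≤ |a/t - b/t| * Real.exp (-(min a b / t)) := by
    have := expDiff (a/t) (b/t)
    rwa [min_div_div_right ht0.le] at this
  have h2 : |a/t - b/t| = |a-b| / t := by
    rw [div_sub_div_same, abs_div, abs_of_nonneg ht0.le]
  calc t⁻¹ * |Real.exp (-(a/t)) - Real.exp (-(b/t))|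
      ≤ t⁻¹ * (|a-b| / t * Real.exp (-(min a b / t))) := by
        apply mul_le_mul_of_nonneg_left _ (inv_nonneg.2 ht0.le)
        rw [← h2]; exact h1
    _ = |a - b| * ((t^2)⁻¹ * Real.exp (-(min a b / t))) := by
        simp only [div_eq_mul_inv, sq, mul_inv]
        ring

lemma valB {a b : ℝ} (ha : 0 < a) (hb : 0 < b) :
    ∫ t in Ioi (0:ℝ), t⁻¹ * (Real.exp (-(a/t)) - Real.exp (-(b/t)))
      = Real.log b - Real.log a := by
  -- first the case a ≤ b
  suffices h : ∀ a b : ℝ, 0 < a → 0 < b → a ≤ b →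
      ∫ t in Ioi (0:ℝ), t⁻¹ * (Real.exp (-(a/t)) - Real.exp (-(b/t)))
        = Real.log b - Real.log a by
    rcases le_total a b with hab | hab
    · exact h a b ha hb hab
    · have := h b a hb ha hab
      have h2 : ∫ t in Ioi (0:ℝ), t⁻¹ * (Real.exp (-(a/t)) - Real.exp (-(b/t)))
          = - ∫ t in Ioi (0:ℝ), t⁻¹ * (Real.exp (-(b/t)) - Real.exp (-(a/t))) := by
        rw [← integral_neg]
        congr 1; funext t; ring
      rw [h2, this]; ring
  clear ha hb a b
  intro a b ha hb hab
  -- pointwise: t⁻¹ (e^{-a/t} - e^{-b/t}) = ∫ s in Ioc a b, (t²)⁻¹ e^{-s/t}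
  have key : ∀ t ∈ Ioi (0:ℝ), t⁻¹ * (Real.exp (-(a/t)) - Real.exp (-(b/t)))
      = ∫ s in Ioc a b, (t^2)⁻¹ * Real.exp (-(s/t)) := by
    intro t ht
    have ht0 : (0:ℝ) < t := ht
    have hftc : ∫ s in a..b, (t^2)⁻¹ * Real.exp (-(s/t))
        = (fun s => -(t⁻¹) * Real.exp (-(s/t))) b - (fun s => -(t⁻¹) * Real.exp (-(s/t))) a := by
      apply intervalIntegral.integral_eq_sub_of_hasDerivAt
      · intro s _
        have h1 : HasDerivAt (fun s : ℝ => -(s/t)) (-(t⁻¹)) s := by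
          simpa [div_eq_mul_inv, Pi.neg_def] using ((hasDerivAt_id s).mul_const t⁻¹).neg
        have h2 := (h1.exp).const_mul (-(t⁻¹))
        refine h2.congr_deriv ?_
        field_simp
      · apply Continuous.intervalIntegrable
        have : Continuous fun s : ℝ => -(s/t) := by
          simp only [div_eq_mul_inv]; exact (continuous_id.mul continuous_const).neg
        exact continuous_const.mul (Real.continuous_exp.comp this)
    rw [← intervalIntegral.integral_of_le hab, hftc]
    simp only
    field_simp
    ring
  rw [setIntegral_congr_fun measurableSet_Ioi key]
  -- Fubini
  set f : ℝ → ℝ → ℝ := fun t s => (t^2)⁻¹ * Real.exp (-(s/t)) with hf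
  have hmeas : AEStronglyMeasurable (Function.uncurry f)
      ((volume.restrict (Ioi (0:ℝ))).prod (volume.restrict (Ioc a b))) := by
    apply Measurable.aestronglyMeasurable
    apply Measurable.mul
    · exact ((measurable_fst.pow_const 2).inv)
    · apply Real.measurable_exp.comp
      simp only [div_eq_mul_inv]
      exact (measurable_snd.mul measurable_fst.inv).neg
  have hcont : ∀ t : ℝ, Continuous fun s => f t s := by
    intro t
    apply continuous_const.mul
    apply Real.continuous_exp.comp
    simp only [div_eq_mul_inv]
    exact (continuous_id.mul continuous_const).neg
  have hprod : Integrable (Function.uncurry f)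
      ((volume.restrict (Ioi 0)).prod (volume.restrict (Ioc a b))) := by
    rw [integrable_prod_iff hmeas]
    constructor
    · exact ae_of_all _ (fun t => (hcont t).integrableOn_Ioc)
    · have hbd : ∀ᵐ t ∂(volume.restrict (Ioi (0:ℝ))),
          ‖∫ s in Ioc a b, ‖f t s‖‖ ≤ (b - a) * ((t^2)⁻¹ * Real.exp (-(a/t))) := by
        rw [ae_restrict_iff' measurableSet_Ioi]
        refine ae_of_all _ (fun t ht => ?_)
        have ht0 : (0:ℝ) < t := ht
        have hnn : ∀ s, ‖f t s‖ = f t s := by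
          intro s; rw [Real.norm_eq_abs, abs_of_nonneg (by positivity)]
        have hle : ∫ s in Ioc a b, ‖f t s‖ ≤ ∫ _s in Ioc a b, (t^2)⁻¹ * Real.exp (-(a/t)) := by
          apply setIntegral_mono_on
          · simp only [hnn]; exact (hcont t).integrableOn_Ioc
          · exact integrableOn_const (by simp [Real.volume_Ioc])
          · exact measurableSet_Ioc
          · intro s hs
            rw [hnn]
            apply mul_le_mul_of_nonneg_left _ (by positivity)
            apply Real.exp_le_exp.2
            have h3 : a/t ≤ s/t := (div_le_div_iff_of_pos_right ht0).2 hs.1.le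
            linarith
        have hconst : ∫ _s in Ioc a b, (t^2)⁻¹ * Real.exp (-(a/t))
            = (b - a) * ((t^2)⁻¹ * Real.exp (-(a/t))) := by
          rw [setIntegral_const, Real.volume_real_Ioc_of_le hab, smul_eq_mul]
        rw [Real.norm_eq_abs, abs_of_nonneg (integral_nonneg (fun s => norm_nonneg _))]
        rw [← hconst]; exact hle
      apply Integrable.mono' ((intA ha).const_mul (b - a)) _ hbd
      exact hmeas.norm.integral_prod_right'
  have hswap := integral_integral_swap hprod
  rw [hswap]
  have hinner : ∀ s ∈ Ioc a b, (∫ t in Ioi (0:ℝ), f t s) = s⁻¹ := by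
    intro s hs
    rw [valA (ha.trans hs.1), one_div]
  rw [setIntegral_congr_fun measurableSet_Ioc hinner]
  rw [← intervalIntegral.integral_of_le hab, integral_inv_of_pos ha hb,
    Real.log_div hb.ne' ha.ne']
lemma exp_arg (c t : ℝ) : -c / (2*t) = -((c/2)/t) := by
  rw [div_div, neg_div]

lemma intC {d : ℝ} (hd : 0 < d) :
    IntegrableOn (fun t => (2*π*t)⁻¹ * (Real.exp (-d^2 / (2*t)) - Real.exp (-1 / (2*t)))) (Ioi 0) ∧
    ∫ t in Ioi (0:ℝ), (2*π*t)⁻¹ * (Real.exp (-d^2 / (2*t)) - Real.exp (-1 / (2*t)))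
      = -(1/π) * Real.log d := by
  have hπ : (0:ℝ) < π := Real.pi_pos
  have ha : 0 < d^2/2 := by positivity
  have hb : (0:ℝ) < 1/2 := by norm_num
  have heq : (fun t : ℝ => (2*π*t)⁻¹ * (Real.exp (-d^2 / (2*t)) - Real.exp (-1 / (2*t))))
      = fun t => (2*π)⁻¹ * (t⁻¹ * (Real.exp (-((d^2/2)/t)) - Real.exp (-(((1:ℝ)/2)/t)))) := by
    funext t
    rw [exp_arg (d^2) t, exp_arg 1 t, mul_inv, mul_assoc]
  constructor
  · rw [heq]; exact (intB ha hb).const_mul _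
  · rw [heq, integral_const_mul, valB ha hb,
      Real.log_div one_ne_zero two_ne_zero, Real.log_div (by positivity) two_ne_zero,
      Real.log_one, Real.log_pow]
    field_simp
    ring
theorem stmt17 (ρ : E2 → ℝ) (hmeas : Measurable ρ) (C : ℝ) (hbd : ∀ y, |ρ y| ≤ C)
    (hsupp : HasCompactSupport ρ) (hzero : ∫ y, ρ y = 0)
    (x : E2) (hx : x ∉ tsupport ρ) :
    MeasureTheory.IntegrableOn (fun t => ∫ y, heatKernel t x y * ρ y) (Set.Ioi 0) ∧
    ∫ t in Set.Ioi (0:ℝ), (∫ y, heatKernel t x y * ρ y)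
      = ∫ y, (-(1/π) * Real.log (dist x y)) * ρ y := by
  have hπ : (0:ℝ) < π := Real.pi_pos
  have hKc : IsCompact (tsupport ρ) := hsupp
  have hKm : MeasurableSet (tsupport ρ) := (isClosed_tsupport ρ).measurableSet
  obtain ⟨δ, hδ0, hδball⟩ : ∃ δ > 0, Metric.ball x δ ⊆ (tsupport ρ)ᶜ := by
    rcases Metric.isOpen_iff.1 (isClosed_tsupport ρ).isOpen_compl x hx with ⟨δ, hδ0, h⟩
    exact ⟨δ, hδ0, h⟩
  have hδ : ∀ y ∈ tsupport ρ, δ ≤ dist x y := by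
    intro y hy
    by_contra h
    push_neg at h
    exact hδball (Metric.mem_ball.2 (by rw [dist_comm]; exact h)) hy
  obtain ⟨R, hR⟩ := hKc.isBounded.subset_closedBall x
  have hRy : ∀ y ∈ tsupport ρ, dist x y ≤ R := by
    intro y hy
    have := hR hy
    rw [Metric.mem_closedBall] at this
    rwa [dist_comm]
  -- ρ is integrable
  have hρint : Integrable ρ := by
    have h1 : Integrable ((tsupport ρ).indicator fun _ => C) := by
      apply IntegrableOn.integrable_indicator _ hKm
      exact integrableOn_const hKc.measure_lt_top.ne
    apply Integrable.mono' h1 hmeas.aestronglyMeasurable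
    refine ae_of_all _ (fun y => ?_)
    by_cases hy : y ∈ tsupport ρ
    · rw [Set.indicator_of_mem hy, Real.norm_eq_abs]; exact hbd y
    · rw [Set.indicator_of_notMem hy, Real.norm_eq_abs,
        image_eq_zero_of_notMem_tsupport hy, abs_zero]
  set m := min (δ^2/2) (1/2 : ℝ) with hm
  have hm0 : 0 < m := lt_min (by positivity) (by norm_num)
  set Mc := max (R^2/2) (1/2 : ℝ) with hMc
  have hMc0 : (0:ℝ) ≤ Mc := le_trans (by norm_num) (le_max_right _ _)
  set G : ℝ → E2 → ℝ := fun t y =>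
    ((2*π*t)⁻¹ * (Real.exp (-(dist x y)^2 / (2*t)) - Real.exp (-1 / (2*t)))) * ρ y with hG
  -- step 1 : for t > 0, the inner integrals agree
  have main1 : ∀ t ∈ Ioi (0:ℝ), (∫ y, heatKernel t x y * ρ y) = ∫ y, G t y := by
    intro t ht
    have ht0 : (0:ℝ) < t := ht
    have h2 : Integrable fun y => heatKernel t x y * ρ y := by
      apply Integrable.bdd_mul hρint
      · apply Continuous.aestronglyMeasurable
        apply continuous_const.mul
        apply Real.continuous_exp.comp
        have : Continuous fun y : E2 => dist x y := continuous_const.dist continuous_id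
        exact (((this.pow 2).neg).div_const (2*t))
      · refine ae_of_all _ (fun y => (?_ : _ ≤ (2*π*t)⁻¹))
        rw [heatKernel, Real.norm_eq_abs, abs_of_nonneg (by positivity)]
        apply mul_le_of_le_one_right (by positivity)
        apply Real.exp_le_one_iff.2
        apply div_nonpos_of_nonpos_of_nonneg (neg_nonpos.2 (by positivity)) (by positivity)
    have h3 : Integrable fun y => ((2*π*t)⁻¹ * Real.exp (-1 / (2*t))) * ρ y :=
      hρint.const_mul _
    have h4 : (fun y => G t y)
        = fun y => heatKernel t x y * ρ y - ((2*π*t)⁻¹ * Real.exp (-1 / (2*t))) * ρ y := by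
      funext y
      simp only [hG, heatKernel]
      ring
    rw [h4, integral_sub h2 h3, integral_const_mul, hzero, mul_zero, sub_zero]
  -- dominating functions
  set F1 : ℝ → ℝ := fun t => (t^2)⁻¹ * Real.exp (-(m/t)) with hF1
  set F2 : E2 → ℝ := fun y => ((2*π)⁻¹ * Mc) * |ρ y| with hF2
  have hF1int : IntegrableOn F1 (Ioi 0) := intA hm0
  have hF2int : Integrable F2 := (hρint.abs).const_mul _
  have hF2nn : ∀ y, 0 ≤ F2 y := fun y => by
    apply mul_nonneg (mul_nonneg (by positivity) hMc0) (abs_nonneg _)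
  have hbound : ∀ t ∈ Ioi (0:ℝ), ∀ y : E2, ‖G t y‖ ≤ F1 t * F2 y := by
    intro t ht y
    have ht0 : (0:ℝ) < t := ht
    have hF1nn : 0 ≤ F1 t := by positivity
    rcases eq_or_ne (ρ y) 0 with h0 | h0
    · simp only [hG, h0, mul_zero, norm_zero]
      exact mul_nonneg hF1nn (hF2nn y)
    · have hyK : y ∈ tsupport ρ := subset_tsupport ρ h0
      have hd1 : δ ≤ dist x y := hδ y hyK
      have hd2 : dist x y ≤ R := hRy y hyK
      have hd0 : 0 < dist x y := lt_of_lt_of_le hδ0 hd1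
      have hMc1 : R^2/2 ≤ Mc := by rw [hMc]; exact le_max_left _ _
      have hMc2 : (1:ℝ)/2 ≤ Mc := by rw [hMc]; exact le_max_right _ _
      have hm1 : m ≤ δ^2/2 := by rw [hm]; exact min_le_left _ _
      have hm2 : m ≤ (1:ℝ)/2 := by rw [hm]; exact min_le_right _ _
      have e1 : |Real.exp (-(dist x y)^2/(2*t)) - Real.exp (-1/(2*t))|
          ≤ Mc / t * Real.exp (-(m/t)) := by
        rw [exp_arg ((dist x y)^2) t, exp_arg 1 t]
        have h5 := expDiff (((dist x y)^2/2)/t) (((1:ℝ)/2)/t)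
        rw [min_div_div_right ht0.le] at h5
        refine le_trans h5 ?_
        have hA : |((dist x y)^2/2)/t - ((1:ℝ)/2)/t| ≤ Mc / t := by
          rw [div_sub_div_same, abs_div, abs_of_nonneg ht0.le]
          have h6 : (dist x y)^2 ≤ R^2 := pow_le_pow_left₀ dist_nonneg hd2 2
          have h7 : |(dist x y)^2/2 - (1:ℝ)/2| ≤ Mc := by
            rw [abs_le]
            constructor
            · nlinarith [sq_nonneg (dist x y)]
            · nlinarith
          exact (div_le_div_iff_of_pos_right ht0).2 h7
        have hB : Real.exp (-(min ((dist x y)^2/2) ((1:ℝ)/2) / t)) ≤ Real.exp (-(m/t)) := by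
          apply Real.exp_le_exp.2
          have h8 : δ^2 ≤ (dist x y)^2 := pow_le_pow_left₀ hδ0.le hd1 2
          have h7 : m ≤ min ((dist x y)^2/2) ((1:ℝ)/2) := by
            apply le_min _ hm2
            nlinarith
          have h9 : m/t ≤ min ((dist x y)^2/2) ((1:ℝ)/2) / t := (div_le_div_iff_of_pos_right ht0).2 h7
          linarith
        exact mul_le_mul hA hB (Real.exp_pos _).le (div_nonneg hMc0 ht0.le)
      calc ‖G t y‖
          = (2*π*t)⁻¹ * |Real.exp (-(dist x y)^2/(2*t)) - Real.exp (-1/(2*t))| * |ρ y| := by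
            simp only [hG, Real.norm_eq_abs, abs_mul]
            rw [abs_of_nonneg (by positivity : (0:ℝ) ≤ (2*π*t)⁻¹)]
        _ ≤ (2*π*t)⁻¹ * (Mc / t * Real.exp (-(m/t))) * |ρ y| := by
            apply mul_le_mul_of_nonneg_right _ (abs_nonneg _)
            exact mul_le_mul_of_nonneg_left e1 (by positivity)
        _ = F1 t * F2 y := by
            simp only [hF1, hF2]
            field_simp
  -- measurability of G on the product space
  have hGmeas : AEStronglyMeasurable (Function.uncurry G)
      ((volume.restrict (Ioi 0)).prod (volume : Measure E2)) := by
    apply Measurable.aestronglyMeasurable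
    have hdist : Measurable fun p : ℝ × E2 => dist x p.2 :=
      ((continuous_const.dist continuous_id).measurable).comp measurable_snd
    have m1 : Measurable fun p : ℝ × E2 => (2*π*p.1)⁻¹ :=
      (measurable_fst.const_mul (2*π)).inv
    have m2 : Measurable fun p : ℝ × E2 => Real.exp (-(dist x p.2)^2 / (2*p.1)) := by
      apply Real.measurable_exp.comp
      simp only [div_eq_mul_inv]
      exact ((hdist.pow_const 2).neg).mul (measurable_fst.const_mul 2).inv
    have m3 : Measurable fun p : ℝ × E2 => Real.exp (-1 / (2*p.1)) := by
      apply Real.measurable_exp.comp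
      simp only [div_eq_mul_inv]
      exact ((measurable_fst.const_mul 2).inv).const_mul (-1)
    exact (m1.mul (m2.sub m3)).mul (hmeas.comp measurable_snd)
  -- integrability of G on the product space
  have hGprodInt : Integrable (Function.uncurry G)
      ((volume.restrict (Ioi 0)).prod (volume : Measure E2)) := by
    apply Integrable.mono' (hF1int.mul_prod hF2int) hGmeas
    have hrw : (volume.restrict (Ioi (0:ℝ))).prod (volume : Measure E2)
        = ((volume : Measure ℝ).prod (volume : Measure E2)).restrict ((Ioi 0) ×ˢ Set.univ) := by
      rw [← Measure.prod_restrict, Measure.restrict_univ]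
    rw [hrw, ae_restrict_iff' (measurableSet_Ioi.prod MeasurableSet.univ)]
    refine ae_of_all _ (fun p hp => ?_)
    exact hbound p.1 hp.1 p.2
  have hInt1 : IntegrableOn (fun t => ∫ y, G t y) (Ioi 0) := hGprodInt.integral_prod_left
  have hconj1 : IntegrableOn (fun t => ∫ y, heatKernel t x y * ρ y) (Ioi 0) := by
    apply hInt1.congr
    exact (ae_restrict_iff' measurableSet_Ioi).2 (ae_of_all _ (fun t ht => (main1 t ht).symm))
  refine ⟨hconj1, ?_⟩
  rw [setIntegral_congr_fun measurableSet_Ioi (fun t ht => main1 t ht)]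
  rw [integral_integral_swap hGprodInt]
  have hfin : ∀ y : E2, (∫ t in Ioi (0:ℝ), G t y) = (-(1/π) * Real.log (dist x y)) * ρ y := by
    intro y
    rcases eq_or_ne (ρ y) 0 with h0 | h0
    · simp [hG, h0]
    · have hyK : y ∈ tsupport ρ := subset_tsupport ρ h0
      have hd0 : 0 < dist x y := lt_of_lt_of_le hδ0 (hδ y hyK)
      have hC := (intC hd0).2
      simp only [hG]
      rw [integral_mul_const, hC]
  exact integral_congr_ae (ae_of_all _ hfin)
end
end
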